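/- (Correctness of the LA-Prune strategy.) Let ≺ be a strict linear order on I that is ascending in mu (i.e., i ≺ j implies mu(i) ≤ mu(j)), X a nonempty itemset, and y an item with x ≺ y for every x ∈ X. If (X.IU + X.RU) − ∑_{T∈D : X⊆T and y∉T} (u(X,T) + ru(X,T)) < MIU(X), then no extension Y of X containing y (i.e., X ∪ {y} ⊆ Y with every j ∈ Y \ X satisfying x ≺ j for all x ∈ X) is an HUI: u(Y) < MIU(Y). -/
import Mathlib


open Finset

variable {ι τ : Type*}

/-- Utility of item `i` in transaction `t`: quantity times unit profit. -/
def itemU (pr : ι → ℝ) (q : ι → τ → ℕ) (i : ι) (t : τ) : ℝ :=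
  (q i t : ℝ) * pr i

/-- Utility of itemset `X` in transaction `t`. -/
def setU (pr : ι → ℝ) (q : ι → τ → ℕ) (X : Finset ι) (t : τ) : ℝ :=
  ∑ i ∈ X, itemU pr q i t

/-- Transaction utility of transaction `t` (with item set `Tr t`). -/
def tu (pr : ι → ℝ) (q : ι → τ → ℕ) (Tr : τ → Finset ι) (t : τ) : ℝ :=
  ∑ i ∈ Tr t, itemU pr q i t

/-- Transaction-weighted utility of itemset `X` in database `D`. -/
def TWU [DecidableEq ι] (pr : ι → ℝ) (q : ι → τ → ℕ) (Tr : τ → Finset ι)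
    (D : Finset τ) (X : Finset ι) : ℝ :=
  ∑ t ∈ D.filter (fun t => X ⊆ Tr t), tu pr q Tr t

/-- Utility of itemset `X` in database `D`. -/
def dbU [DecidableEq ι] (pr : ι → ℝ) (q : ι → τ → ℕ) (Tr : τ → Finset ι)
    (D : Finset τ) (X : Finset ι) : ℝ :=
  ∑ t ∈ D.filter (fun t => X ⊆ Tr t), setU pr q X t

/-- Minimum itemset utility of a nonempty itemset `X`. -/
def MIU (mu : ι → ℝ) (X : Finset ι) (hX : X.Nonempty) : ℝ :=
  X.inf' hX mu

/-- Remaining utility of itemset `X` in transaction `t`: total utility of the items of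
`Tr t` that come strictly after every item of `X`. -/
def ru [LinearOrder ι] (pr : ι → ℝ) (q : ι → τ → ℕ) (Tr : τ → Finset ι)
    (X : Finset ι) (t : τ) : ℝ :=
  ∑ i ∈ (Tr t).filter (fun i => ∀ x ∈ X, x < i), itemU pr q i t

/-- Sum of the remaining utilities of itemset `X` over the database `D` (`X.RU`). -/
def dbRU [LinearOrder ι] (pr : ι → ℝ) (q : ι → τ → ℕ) (Tr : τ → Finset ι)
    (D : Finset τ) (X : Finset ι) : ℝ :=
  ∑ t ∈ D.filter (fun t => X ⊆ Tr t), ru pr q Tr X t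

/-- correctness of the LA-Prune strategy. If
`(X.IU + X.RU) - ∑_{t ∈ D, X ⊆ t, y ∉ t} (u(X,t) + ru(X,t)) < MIU(X)`, then no extension
of `X` containing `y` is an HUI. -/
theorem LA_prune_correct [LinearOrder ι] (I : Finset ι) (pr mu : ι → ℝ)
    (hpr : ∀ i, 0 ≤ pr i) (hmu : ∀ i, 0 < mu i)
    (hasc : ∀ i j : ι, i < j → mu i ≤ mu j)
    (D : Finset τ) (Tr : τ → Finset ι) (q : ι → τ → ℕ)
    (hq : ∀ t ∈ D, ∀ i ∈ Tr t, 0 < q i t) (hTr : ∀ t ∈ D, Tr t ⊆ I)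
    (X : Finset ι) (hX : X.Nonempty) (hXI : X ⊆ I)
    (y : ι) (hyI : y ∈ I) (hy : ∀ x ∈ X, x < y)
    (hprune : (dbU pr q Tr D X + dbRU pr q Tr D X) -
      ∑ t ∈ D.filter (fun t => X ⊆ Tr t ∧ y ∉ Tr t),
        (setU pr q X t + ru pr q Tr X t) < MIU mu X hX) :
    ∀ (Y : Finset ι) (hXY : X ⊆ Y), X ∪ {y} ⊆ Y → Y ⊆ I →
      (∀ j ∈ Y \ X, ∀ x ∈ X, x < j) →
      dbU pr q Tr D Y < MIU mu Y (hX.mono hXY) := by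

  intro Y hXY hXyY hYI hext
  classical
  have hitem : ∀ i t, 0 ≤ itemU pr q i t := fun i t =>
    mul_nonneg (Nat.cast_nonneg _) (hpr i)
  have hsetU : ∀ (Z : Finset ι) t, 0 ≤ setU pr q Z t := by
    intro Z t; exact Finset.sum_nonneg fun i _ => hitem i t
  have hru : ∀ (Z : Finset ι) t, 0 ≤ ru pr q Tr Z t := by
    intro Z t; exact Finset.sum_nonneg fun i _ => hitem i t
  have hyY : y ∈ Y := hXyY (by simp)
  -- MIU X ≤ MIU Y
  have hMIU : MIU mu X hX ≤ MIU mu Y (hX.mono hXY) := by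
    apply Finset.le_inf'
    intro b hb
    by_cases hbX : b ∈ X
    · exact Finset.inf'_le mu hbX
    · obtain ⟨x, hx⟩ := hX
      exact le_trans (Finset.inf'_le mu hx)
        (hasc x b (hext b (Finset.mem_sdiff.mpr ⟨hb, hbX⟩) x hx))
  -- key per-transaction bound
  have hkey : ∀ t, Y ⊆ Tr t → setU pr q Y t ≤ setU pr q X t + ru pr q Tr X t := by
    intro t hYt
    have hYdecomp : Y = X ∪ (Y \ X) := by
      rw [Finset.union_sdiff_of_subset hXY]
    have : setU pr q Y t = setU pr q X t + ∑ i ∈ Y \ X, itemU pr q i t := by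
      rw [setU, setU, ← Finset.sum_union Finset.disjoint_sdiff,
        Finset.union_sdiff_of_subset hXY]
    rw [this]
    gcongr
    apply Finset.sum_le_sum_of_subset_of_nonneg
    · intro i hi
      simp only [Finset.mem_filter]
      exact ⟨hYt ((Finset.sdiff_subset) hi), hext i hi⟩
    · intro i _ _; exact hitem i t
  -- filter inclusion
  have hfilt : D.filter (fun t => Y ⊆ Tr t) ⊆ D.filter (fun t => X ⊆ Tr t ∧ y ∈ Tr t) := by
    intro t ht
    simp only [Finset.mem_filter] at ht ⊢
    exact ⟨ht.1, hXY.trans ht.2, ht.2 hyY⟩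
  have h1 : dbU pr q Tr D Y ≤
      ∑ t ∈ D.filter (fun t => X ⊆ Tr t ∧ y ∈ Tr t), (setU pr q X t + ru pr q Tr X t) := by
    calc dbU pr q Tr D Y ≤ ∑ t ∈ D.filter (fun t => Y ⊆ Tr t),
          (setU pr q X t + ru pr q Tr X t) := by
          apply Finset.sum_le_sum
          intro t ht
          exact hkey t (Finset.mem_filter.mp ht).2
      _ ≤ _ := by
          apply Finset.sum_le_sum_of_subset_of_nonneg hfilt
          intro t _ _
          exact add_nonneg (hsetU X t) (hru X t)
  have hsplit : ∑ t ∈ D.filter (fun t => X ⊆ Tr t), (setU pr q X t + ru pr q Tr X t) =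
      ∑ t ∈ D.filter (fun t => X ⊆ Tr t ∧ y ∈ Tr t), (setU pr q X t + ru pr q Tr X t) +
      ∑ t ∈ D.filter (fun t => X ⊆ Tr t ∧ y ∉ Tr t), (setU pr q X t + ru pr q Tr X t) := by
    rw [← Finset.sum_filter_add_sum_filter_not (D.filter fun t => X ⊆ Tr t) (fun t => y ∈ Tr t)]
    congr 1 <;> · congr 1; ext t; simp [Finset.mem_filter, and_assoc]
  have h2 : ∑ t ∈ D.filter (fun t => X ⊆ Tr t ∧ y ∈ Tr t), (setU pr q X t + ru pr q Tr X t)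
      < MIU mu X hX := by
    have : dbU pr q Tr D X + dbRU pr q Tr D X =
        ∑ t ∈ D.filter (fun t => X ⊆ Tr t), (setU pr q X t + ru pr q Tr X t) := by
      rw [dbU, dbRU, ← Finset.sum_add_distrib]
    rw [this, hsplit] at hprune
    linarith
  exact lt_of_lt_of_le (lt_of_le_of_lt h1 h2) hMIU
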